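/- Let A = {(0,0),(5,0),(3,1),(1,2),(0,5)} ⊂ ℤ². Then for every t ≥ 0, |tA| = (5t² + 3t + 2)/2. -/

import Mathlib

open Pointwise

noncomputable def S7 (t : ℕ) : Finset (ℤ × ℤ) :=
  ((Finset.Icc (0:ℤ) (5*t)) ×ˢ (Finset.Icc (0:ℤ) (5*t))).filter
    (fun p => p.1 + p.2 ≤ 5*t ∧ (5:ℤ) ∣ p.1 + 2*p.2)

lemma mem_S7 {t : ℕ} {p : ℤ × ℤ} :
    p ∈ S7 t ↔ 0 ≤ p.1 ∧ 0 ≤ p.2 ∧ p.1 + p.2 ≤ 5*t ∧ (5:ℤ) ∣ p.1 + 2*p.2 := by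
  simp only [S7, Finset.mem_filter, Finset.mem_product, Finset.mem_Icc]
  omega

def A7 : Finset (ℤ × ℤ) := {(0,0), (5,0), (3,1), (1,2), (0,5)}

lemma S7_succ (t : ℕ) : S7 (t+1) = S7 t + A7 := by
  ext p
  obtain ⟨x, y⟩ := p
  simp only [Finset.mem_add, mem_S7]
  constructor
  · rintro ⟨hx, hy, hs, hd⟩
    push_cast at hs
    by_cases h1 : x + y ≤ 5*t
    · exact ⟨(x,y), ⟨hx, hy, h1, hd⟩, (0,0), by simp [A7], by simp⟩
    · by_cases h2 : 5 ≤ y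
      · exact ⟨(x, y - 5), ⟨by dsimp; omega, by dsimp; omega, by dsimp; omega,
          by dsimp; omega⟩, (0,5), by simp [A7], by simp⟩
      · by_cases h3 : 5 ≤ x
        · exact ⟨(x - 5, y), ⟨by dsimp; omega, by dsimp; omega, by dsimp; omega,
            by dsimp; omega⟩, (5,0), by simp [A7], by simp⟩
        · by_cases h4 : 1 ≤ x ∧ 2 ≤ y
          · exact ⟨(x - 1, y - 2), ⟨by dsimp; omega, by dsimp; omega,
              by dsimp; interval_cases x <;> interval_cases y <;> omega,
              by dsimp; omega⟩, (1,2), by simp [A7], by simp⟩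
          · exact ⟨(x - 3, y - 1), ⟨by dsimp; interval_cases x <;> interval_cases y <;> omega,
              by dsimp; interval_cases x <;> interval_cases y <;> omega,
              by dsimp; interval_cases x <;> interval_cases y <;> omega,
              by dsimp; omega⟩, (3,1), by simp [A7], by simp⟩
  · rintro ⟨⟨qx, qy⟩, hq, a, ha, he⟩
    obtain ⟨h1, h2, h3, h4⟩ := hq
    rw [Prod.ext_iff] at he
    fin_cases ha <;> dsimp at he h1 h2 h3 h4 ⊢ <;> push_cast <;> omega

lemma S7_nsmul : ∀ t : ℕ, t • A7 = S7 t := by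
  intro t
  induction t with
  | zero =>
    rw [zero_nsmul]
    ext p
    simp only [mem_S7, Finset.mem_zero, Prod.ext_iff, Prod.fst_zero, Prod.snd_zero]
    push_cast
    omega
  | succ n ih =>
    rw [succ_nsmul, ih, S7_succ]

def cnt7 (t y : ℕ) : ℕ := (5*t + 5 - y - (3*y) % 5) / 5

def Row7 (t y : ℕ) : Finset (ℤ × ℤ) :=
  (Finset.range (cnt7 t y)).image
    (fun k : ℕ => ((((3*y) % 5 : ℕ) : ℤ) + 5*(k:ℤ), (y:ℤ)))

lemma mem_Row7 {t y : ℕ} {p : ℤ × ℤ} (hy : y ≤ 5*t) :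
    p ∈ Row7 t y ↔ p.2 = y ∧ 0 ≤ p.1 ∧ p.1 + p.2 ≤ 5*t ∧ (5:ℤ) ∣ p.1 + 2*p.2 := by
  simp only [Row7, Finset.mem_image, Finset.mem_range]
  constructor
  · rintro ⟨k, hk, rfl⟩
    have hk' : 5*k + (3*y) % 5 + y ≤ 5*t := by
      simp only [cnt7] at hk; omega
    have hr : (3*y) % 5 % 5 = (3*y) % 5 := Nat.mod_mod_of_dvd _ (by norm_num)
    refine ⟨rfl, ?_, ?_, ?_⟩ <;> dsimp <;> push_cast <;> omega
  · rintro ⟨h2, h0, hs, hd⟩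
    obtain ⟨m, hm⟩ := hd
    obtain ⟨x, py⟩ := p
    dsimp at h2 h0 hs hm ⊢
    subst h2
    have h5 : (5:ℤ) ∣ x - (((3*y) % 5 : ℕ) : ℤ) := by push_cast; omega
    obtain ⟨k, hk⟩ := h5
    have hk0 : 0 ≤ k := by push_cast at hk; omega
    refine ⟨k.toNat, ?_, ?_⟩
    · simp only [cnt7]
      push_cast at hk
      omega
    · rw [Prod.ext_iff]
      refine ⟨?_, rfl⟩
      dsimp
      omega

lemma card_Row7 (t y : ℕ) : (Row7 t y).card = cnt7 t y := by
  rw [Row7, Finset.card_image_of_injective _ (fun a b h => by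
    simp only [Prod.mk.injEq] at h; omega), Finset.card_range]

lemma S7_eq (t : ℕ) : S7 t = (Finset.range (5*t+1)).biUnion (Row7 t) := by
  ext p
  simp only [Finset.mem_biUnion, Finset.mem_range, mem_S7]
  constructor
  · rintro ⟨h0, h0', hs, hd⟩
    refine ⟨p.2.toNat, by omega, ?_⟩
    rw [mem_Row7 (by omega)]
    exact ⟨by omega, h0, by omega, by omega⟩
  · rintro ⟨y, hy, hp⟩
    rw [mem_Row7 (by omega)] at hp
    exact ⟨hp.2.1, by omega, hp.2.2.1, hp.2.2.2⟩

lemma card_S7 (t : ℕ) : (S7 t).card = ∑ y ∈ Finset.range (5*t+1), cnt7 t y := by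
  rw [S7_eq, Finset.card_biUnion, Finset.sum_congr rfl (fun y _ => card_Row7 t y)]
  intro y1 _ y2 _ hne
  simp only [Finset.disjoint_left, Row7, Finset.mem_image, Finset.mem_range]
  rintro p ⟨k, _, rfl⟩ ⟨k', _, h⟩
  simp only [Prod.mk.injEq] at h
  exact hne (by exact_mod_cast h.2.symm)

lemma cnt7_succ {t y : ℕ} (h : y ≤ 5*t) : cnt7 (t+1) y = cnt7 t y + 1 := by
  simp only [cnt7]; omega

lemma sum_cnt7_succ (t : ℕ) :
    ∑ y ∈ Finset.range (5*(t+1)+1), cnt7 (t+1) y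
      = (∑ y ∈ Finset.range (5*t+1), cnt7 t y) + (5*t + 4) := by
  have h6 : 5*(t+1)+1 = (((((5*t+1)+1)+1)+1)+1)+1 := by ring
  rw [h6, Finset.sum_range_succ, Finset.sum_range_succ, Finset.sum_range_succ,
    Finset.sum_range_succ, Finset.sum_range_succ]
  have h1 : ∑ y ∈ Finset.range (5*t+1), cnt7 (t+1) y
      = ∑ y ∈ Finset.range (5*t+1), (cnt7 t y + 1) :=
    Finset.sum_congr rfl
      (fun y hy => cnt7_succ (Nat.lt_succ_iff.mp (Finset.mem_range.mp hy)))
  rw [h1, Finset.sum_add_distrib, Finset.sum_const, Finset.card_range]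
  have e1 : cnt7 (t+1) (5*t+1) = 1 := by simp only [cnt7]; omega
  have e2 : cnt7 (t+1) (5*t+2) = 1 := by simp only [cnt7]; omega
  have e3 : cnt7 (t+1) (5*t+3) = 0 := by simp only [cnt7]; omega
  have e4 : cnt7 (t+1) (5*t+4) = 0 := by simp only [cnt7]; omega
  have e5 : cnt7 (t+1) (5*t+5) = 1 := by simp only [cnt7]; omega
  have g1 : (5*t+1)+1 = 5*t+2 := by ring
  have g2 : (5*t+2)+1 = 5*t+3 := by ring
  have g3 : (5*t+3)+1 = 5*t+4 := by ring
  have g4 : (5*t+4)+1 = 5*t+5 := by ring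
  rw [g1, g2, g3, g4, e1, e2, e3, e4, e5]
  ring

lemma two_mul_card_S7 : ∀ t : ℕ, 2 * (S7 t).card = 5 * t ^ 2 + 3 * t + 2 := by
  intro t
  induction t with
  | zero =>
    rw [card_S7]
    simp [cnt7]
  | succ n ih =>
    rw [card_S7] at ih ⊢
    rw [sum_cnt7_succ]
    have : (n+1)^2 = n^2 + 2*n + 1 := by ring
    rw [this] at *
    omega

/-- For `A = {(0,0),(5,0),(3,1),(1,2),(0,5)} ⊂ ℤ²`, `|tA| = (5t² + 3t + 2)/2` for every `t ≥ 0`. -/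
theorem stmt_7 (A : Finset (ℤ × ℤ))
    (hA : A = {(0,0), (5,0), (3,1), (1,2), (0,5)}) :
    ∀ t : ℕ, 2 * (t • A).card = 5 * t ^ 2 + 3 * t + 2 := by
  intro t
  have : A = A7 := hA
  rw [this, S7_nsmul]
  exact two_mul_card_S7 t
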